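/- Strip lemma for γ-reduction in the λ^p-calculus: if M →_γ N₁ (one-step γ-reduction) and M ↠_γ N₂ (γ-reduction), then there exists a λ^p-term N₃ such that N₁ ↠_γ N₃ and N₂ ↠_γ N₃. -/

import Mathlib

/-- λ^p-terms: M ::= x | M₁ M₂ | λx.M | (M₁, M₂) over a countably infinite
set of variables. -/
inductive PTerm : Type
  | var : ℕ → PTerm
  | app : PTerm → PTerm → PTerm
  | lam : ℕ → PTerm → PTerm
  | coll : PTerm → PTerm → PTerm

/-- The congruence on λ^p-terms generated by (ClnOrd) M,N ≡ N,M and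
(ClnNest) (M,N),P ≡ M,(N,P): the smallest equivalence relation compatible
with all term constructors containing the two axioms. -/
inductive Cong : PTerm → PTerm → Prop
  | refl (M : PTerm) : Cong M M
  | symm {M N : PTerm} : Cong M N → Cong N M
  | trans {M N P : PTerm} : Cong M N → Cong N P → Cong M P
  | app {M M' N N' : PTerm} : Cong M M' → Cong N N' → Cong (.app M N) (.app M' N')
  | lam (x : ℕ) {M M' : PTerm} : Cong M M' → Cong (.lam x M) (.lam x M')
  | coll {M M' N N' : PTerm} : Cong M M' → Cong N N' → Cong (.coll M N) (.coll M' N')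
  | ord (M N : PTerm) : Cong (.coll M N) (.coll N M)
  | nest (M N P : PTerm) : Cong (.coll (.coll M N) P) (.coll M (.coll N P))

/-- `collOf M [N₁,…,Nₖ]` is the right-associated collection `(M, N₁, …, Nₖ)`. -/
def collOf : PTerm → List PTerm → PTerm
  | M, [] => M
  | M, N :: L => .coll M (collOf N L)

/-- A term is a collection if its outermost constructor is the comma. -/
def IsColl : PTerm → Prop
  | .coll _ _ => True
  | _ => False

/-- The γ-relation of the λ^p-calculus: it relates each application P Q, where
P is congruent to a collection (M₀,…,M_m) and Q to a collection (N₀,…,N_n)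
with at least one of them a proper (more-than-one-element) collection, to the
collection of all applications M_i N_j. -/
inductive Gamma : PTerm → PTerm → Prop
  | mk (P Q M N : PTerm) (Ms Ns : List PTerm)
      (hP : Cong P (collOf M Ms)) (hQ : Cong Q (collOf N Ns))
      (hn : Ms ≠ [] ∨ Ns ≠ []) :
      Gamma (.app P Q)
        (collOf (.app M N)
          (Ns.map (.app M) ++ Ms.flatMap fun Mi => (N :: Ns).map (.app Mi)))

/-- One-step γ-reduction: the compatible closure (closure under all term
constructors) of the γ-relation. -/
inductive StepG : PTerm → PTerm → Prop
  | gamma {M N : PTerm} : Gamma M N → StepG M N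
  | appL {M M' N : PTerm} : StepG M M' → StepG (.app M N) (.app M' N)
  | appR {M N N' : PTerm} : StepG N N' → StepG (.app M N) (.app M N')
  | lam (x : ℕ) {M M' : PTerm} : StepG M M' → StepG (.lam x M) (.lam x M')
  | collL {M M' N : PTerm} : StepG M M' → StepG (.coll M N) (.coll M' N)
  | collR {M N N' : PTerm} : StepG N N' → StepG (.coll M N) (.coll M N')

/-- γ-reduction ↠_γ : the reflexive-transitive closure of one-step
γ-reduction, on terms considered up to the congruence generated by
(ClnOrd) and (ClnNest). -/
def RedG : PTerm → PTerm → Prop :=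
  Relation.ReflTransGen (fun M N => StepG M N ∨ Cong M N)

namespace StripAux

/-! ### An injective encoding of terms into ℕ, and the induced linear order -/

def enc : PTerm → ℕ
  | .var n => Nat.pair 0 n
  | .app a b => Nat.pair 1 (Nat.pair (enc a) (enc b))
  | .lam x a => Nat.pair 2 (Nat.pair x (enc a))
  | .coll a b => Nat.pair 3 (Nat.pair (enc a) (enc b))

theorem enc_inj : ∀ (a b : PTerm), enc a = enc b → a = b := by
  intro a
  induction a with
  | var n => intro b h; cases b <;> simp [enc, Nat.pair_eq_pair] at h; simp [h]
  | app a₁ a₂ ih₁ ih₂ =>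
    intro b h; cases b <;> simp [enc, Nat.pair_eq_pair] at h
    rw [ih₁ _ h.1, ih₂ _ h.2]
  | lam x a ih =>
    intro b h; cases b <;> simp [enc, Nat.pair_eq_pair] at h
    rw [h.1, ih _ h.2]
  | coll a₁ a₂ ih₁ ih₂ =>
    intro b h; cases b <;> simp [enc, Nat.pair_eq_pair] at h
    rw [ih₁ _ h.1, ih₂ _ h.2]

def ple (a b : PTerm) : Bool := enc a ≤ enc b

def R (a b : PTerm) : Prop := enc a ≤ enc b

instance : IsTrans PTerm R := ⟨fun _ _ _ h₁ h₂ => le_trans h₁ h₂⟩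
instance : IsAntisymm PTerm R := ⟨fun a b h₁ h₂ => enc_inj a b (le_antisymm h₁ h₂)⟩
instance : IsTotal PTerm R := ⟨fun a b => le_total (enc a) (enc b)⟩

def srt (l : List PTerm) : List PTerm := l.mergeSort ple

theorem srt_perm (l : List PTerm) : List.Perm (srt l) l := List.mergeSort_perm l ple

theorem srt_sorted (l : List PTerm) : (srt l).Pairwise R := by
  have h := List.pairwise_mergeSort (le := ple)
    (fun a b c h₁ h₂ => by
      simp only [ple, decide_eq_true_eq] at *; exact le_trans h₁ h₂)
    (fun a b => by
      simp only [ple, Bool.or_eq_true, decide_eq_true_eq]; exact le_total _ _) l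
  refine List.Pairwise.imp ?_ h
  intro a b hab
  simpa [ple, R] using hab

theorem sorted_eq {l l' : List PTerm} (h : List.Perm l l') (h₁ : l.Pairwise R) (h₂ : l'.Pairwise R) :
    l = l' := List.Perm.eq_of_pairwise (fun a b _ _ h₁ h₂ => enc_inj a b (le_antisymm h₁ h₂)) h₁ h₂ h

/-! ### Flattening collections: `parts` and `mkColl` -/

def nc : PTerm → Prop
  | .coll _ _ => False
  | _ => True

def parts : PTerm → List PTerm
  | .var n => [.var n]
  | .app a b => [.app a b]
  | .lam x a => [.lam x a]
  | .coll a b => parts a ++ parts b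

theorem parts_ne_nil (t : PTerm) : parts t ≠ [] := by
  induction t <;> simp_all [parts]

theorem parts_nc (t : PTerm) : ∀ a ∈ parts t, nc a := by
  induction t with
  | var n => simp [parts, nc]
  | app a b => simp [parts, nc]
  | lam x a => simp [parts, nc]
  | coll a b ih₁ ih₂ =>
    intro x hx
    rcases List.mem_append.mp hx with h | h
    · exact ih₁ x h
    · exact ih₂ x h

theorem parts_of_nc {t : PTerm} (h : nc t) : parts t = [t] := by
  cases t <;> simp_all [parts, nc]

theorem parts_singleton {a b : PTerm} (h : parts a = [b]) : a = b := by
  cases a with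
  | var n => simpa [parts] using h
  | app a₁ a₂ => simpa [parts] using h
  | lam x a₁ => simpa [parts] using h
  | coll a₁ a₂ =>
    exfalso
    have hl : (parts a₁ ++ parts a₂).length = 1 := by rw [parts] at h; rw [h]; rfl
    rw [List.length_append] at hl
    have h1 := List.length_pos_iff.mpr (parts_ne_nil a₁)
    have h2 := List.length_pos_iff.mpr (parts_ne_nil a₂)
    omega

def mkColl : List PTerm → PTerm
  | [] => .var 0
  | [a] => a
  | a :: b :: l => .coll a (mkColl (b :: l))

theorem mkColl_cons (a : PTerm) (l : List PTerm) : mkColl (a :: l) = collOf a l := by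
  induction l generalizing a with
  | nil => rfl
  | cons b l ih => simp [mkColl, collOf, ih]

theorem mkColl_cons_ne (a : PTerm) {l : List PTerm} (h : l ≠ []) :
    mkColl (a :: l) = .coll a (mkColl l) := by
  cases l with
  | nil => exact absurd rfl h
  | cons b l => rfl

theorem parts_mkColl : ∀ l : List PTerm, l ≠ [] → (∀ a ∈ l, nc a) → parts (mkColl l) = l := by
  intro l
  induction l with
  | nil => intro h; exact absurd rfl h
  | cons a l ih =>
    intro _ hnc
    cases l with
    | nil => exact parts_of_nc (hnc a (by simp))
    | cons b l =>
      show parts (.coll a (mkColl (b :: l))) = _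
      rw [parts, parts_of_nc (hnc a (by simp)), ih (by simp) (fun x hx => hnc x (by simp [hx]))]
      rfl

/-! ### The γ-normal form `nf` -/

def allApps (ps qs : List PTerm) : List PTerm := ps.flatMap fun p => qs.map (.app p)

def mkApp (a b : PTerm) : PTerm :=
  if (parts a).length = 1 ∧ (parts b).length = 1 then .app a b
  else mkColl (srt (allApps (parts a) (parts b)))

def nf : PTerm → PTerm
  | .var n => .var n
  | .app a b => mkApp (nf a) (nf b)
  | .lam x a => .lam x (nf a)
  | .coll a b => mkColl (srt (parts (nf a) ++ parts (nf b)))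

theorem allApps_ne_nil {ps qs : List PTerm} (hp : ps ≠ []) (hq : qs ≠ []) :
    allApps ps qs ≠ [] := by
  intro h
  rcases List.exists_mem_of_ne_nil ps hp with ⟨p, hp'⟩
  have := List.flatMap_eq_nil_iff.mp h _ hp'
  exact hq (List.map_eq_nil_iff.mp this)

theorem allApps_nc {ps qs : List PTerm} : ∀ a ∈ allApps ps qs, nc a := by
  intro a ha
  simp [allApps] at ha
  obtain ⟨p, _, q, _, rfl⟩ := ha
  trivial

theorem srt_nc {l : List PTerm} (h : ∀ a ∈ l, nc a) : ∀ a ∈ srt l, nc a :=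
  fun a ha => h a ((srt_perm l).mem_iff.mp ha)

theorem srt_ne_nil {l : List PTerm} (h : l ≠ []) : srt l ≠ [] := by
  intro h'
  have : List.Perm ([] : List PTerm) l := h' ▸ (srt_perm l)
  exact h this.nil_eq.symm

theorem parts_nf_coll (a b : PTerm) :
    parts (nf (.coll a b)) = srt (parts (nf a) ++ parts (nf b)) := by
  show parts (mkColl _) = _
  refine parts_mkColl _ (srt_ne_nil (by simp [parts_ne_nil])) (srt_nc ?_)
  intro x hx
  rcases List.mem_append.mp hx with h | h
  · exact parts_nc _ x h
  · exact parts_nc _ x h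

theorem parts_nf_sorted (t : PTerm) : (parts (nf t)).Pairwise R := by
  cases t with
  | var n => simp [nf, parts]
  | lam x a => simp [nf, parts]
  | coll a b => rw [parts_nf_coll]; exact srt_sorted _
  | app a b =>
    show (parts (mkApp (nf a) (nf b))).Pairwise R
    rw [mkApp]
    split
    · simp [parts]
    · rw [parts_mkColl _ (srt_ne_nil (allApps_ne_nil (parts_ne_nil _) (parts_ne_nil _)))
        (srt_nc allApps_nc)]
      exact srt_sorted _

theorem mkColl_parts_nf (t : PTerm) : mkColl (parts (nf t)) = nf t := by
  cases t with
  | var n => rfl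
  | lam x a => rfl
  | coll a b =>
    rw [parts_nf_coll]
    show mkColl _ = mkColl _
    rfl
  | app a b =>
    show mkColl (parts (mkApp (nf a) (nf b))) = mkApp (nf a) (nf b)
    rw [mkApp]
    split
    · rfl
    · rw [parts_mkColl _ (srt_ne_nil (allApps_ne_nil (parts_ne_nil _) (parts_ne_nil _)))
        (srt_nc allApps_nc)]

theorem nf_ext {s t : PTerm} (h : List.Perm (parts (nf s)) (parts (nf t))) : nf s = nf t := by
  rw [← mkColl_parts_nf s, ← mkColl_parts_nf t,
    sorted_eq h (parts_nf_sorted s) (parts_nf_sorted t)]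

theorem parts_mkApp_perm (a b : PTerm) :
    List.Perm (parts (mkApp a b)) (allApps (parts a) (parts b)) := by
  rw [mkApp]
  split
  case isTrue h =>
    obtain ⟨ha, hb⟩ := h
    obtain ⟨x, hx⟩ := List.length_eq_one_iff.mp ha
    obtain ⟨y, hy⟩ := List.length_eq_one_iff.mp hb
    rw [hx, hy, ← parts_singleton hx, ← parts_singleton hy]
    simp [parts, allApps]
  case isFalse =>
    rw [parts_mkColl _ (srt_ne_nil (allApps_ne_nil (parts_ne_nil _) (parts_ne_nil _)))
      (srt_nc allApps_nc)]
    exact srt_perm _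

theorem parts_nf_collOf : ∀ (Xs : List PTerm) (X : PTerm),
    List.Perm (parts (nf (collOf X Xs)))
      (parts (nf X) ++ Xs.flatMap fun y => parts (nf y)) := by
  intro Xs
  induction Xs with
  | nil => intro X; simp [collOf]
  | cons y L ih =>
    intro X
    show List.Perm (parts (nf (.coll X (collOf y L)))) _
    rw [parts_nf_coll]
    refine (srt_perm _).trans ?_
    simp only [List.flatMap_cons, ← List.append_assoc]
    refine ((ih y).append_left (parts (nf X))).trans ?_
    simp [List.append_assoc]

/-! ### Multiset versions -/

def pn (t : PTerm) : Multiset PTerm := (parts (nf t) : Multiset PTerm)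

def mAA (s t : Multiset PTerm) : Multiset PTerm := s.bind fun p => t.map (.app p)

theorem pn_app (a b : PTerm) : pn (.app a b) = mAA (pn a) (pn b) := by
  have h1 : pn (.app a b)
      = ((allApps (parts (nf a)) (parts (nf b)) : List PTerm) : Multiset PTerm) :=
    Multiset.coe_eq_coe.mpr (parts_mkApp_perm (nf a) (nf b))
  rw [h1, allApps, ← Multiset.coe_bind]
  rfl

theorem pn_collOf (X : PTerm) (Xs : List PTerm) :
    pn (collOf X Xs) = pn X + (Xs : Multiset PTerm).bind pn := by
  show ((parts (nf (collOf X Xs)) : List PTerm) : Multiset PTerm) = _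
  rw [Multiset.coe_eq_coe.mpr (parts_nf_collOf Xs X)]
  rw [show ((Xs : Multiset PTerm).bind pn) = ((Xs : Multiset PTerm).bind fun y =>
    ((parts (nf y) : List PTerm) : Multiset PTerm)) from rfl]
  rw [Multiset.coe_bind, ← Multiset.coe_add]
  rfl

theorem mAA_add_left (s s' t : Multiset PTerm) : mAA (s + s') t = mAA s t + mAA s' t :=
  Multiset.add_bind _ _ _

theorem mAA_add_right (s t t' : Multiset PTerm) : mAA s (t + t') = mAA s t + mAA s t' := by
  simp [mAA, Multiset.map_add]

theorem mAA_bind_left (m : Multiset PTerm) (f : PTerm → Multiset PTerm) (t : Multiset PTerm) :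
    mAA (m.bind f) t = m.bind fun a => mAA (f a) t :=
  Multiset.bind_assoc

theorem mAA_bind_right (s : Multiset PTerm) (m : Multiset PTerm) (f : PTerm → Multiset PTerm) :
    mAA s (m.bind f) = m.bind fun a => mAA s (f a) := by
  simp only [mAA, Multiset.map_bind]
  exact Multiset.bind_bind _ _

/-! ### Invariance of `nf` under `Cong` -/

theorem cong_nf {s t : PTerm} (h : Cong s t) : nf s = nf t := by
  induction h with
  | refl => rfl
  | symm _ ih => exact ih.symm
  | trans _ _ ih₁ ih₂ => exact ih₁.trans ih₂
  | app _ _ ih₁ ih₂ => simp only [nf, ih₁, ih₂]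
  | lam x _ ih => simp only [nf, ih]
  | coll _ _ ih₁ ih₂ => simp only [nf, ih₁, ih₂]
  | ord M N =>
    apply nf_ext
    rw [parts_nf_coll, parts_nf_coll]
    exact (srt_perm _).trans (List.perm_append_comm.trans (srt_perm _).symm)
  | nest M N P =>
    apply nf_ext
    rw [parts_nf_coll, parts_nf_coll, parts_nf_coll, parts_nf_coll]
    refine (srt_perm _).trans (List.Perm.trans ?_ (srt_perm _).symm)
    refine ((srt_perm _).append_right _).trans ?_
    rw [List.append_assoc]
    exact ((srt_perm _).symm.append_left _)

theorem pn_cong {s t : PTerm} (h : Cong s t) : pn s = pn t := by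
  unfold pn; rw [cong_nf h]

/-! ### Invariance of `nf` under γ-steps -/

theorem gamma_nf {s t : PTerm} (h : Gamma s t) : nf s = nf t := by
  cases h with
  | mk P Q M N Ms Ns hP hQ hn =>
    apply nf_ext
    rw [← Multiset.coe_eq_coe]
    show pn (.app P Q) = pn (collOf (.app M N) _)
    rw [pn_app, pn_cong hP, pn_cong hQ, pn_collOf, pn_collOf, pn_collOf, pn_app]
    rw [← Multiset.coe_add (Ns.map (PTerm.app M))]
    rw [show ((Ns.map (PTerm.app M) : List PTerm) : Multiset PTerm)
      = (Ns : Multiset PTerm).map (PTerm.app M) from rfl]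
    rw [show ((Ms.flatMap fun Mi => (N :: Ns).map (PTerm.app Mi) : List PTerm) : Multiset PTerm)
      = (Ms : Multiset PTerm).bind fun Mi =>
          (((N :: Ns).map (PTerm.app Mi) : List PTerm) : Multiset PTerm) from
      (Multiset.coe_bind _ _).symm]
    rw [Multiset.add_bind, Multiset.bind_map, Multiset.bind_assoc]
    rw [mAA_add_left, mAA_add_right, mAA_add_right]
    rw [mAA_bind_left, mAA_bind_left]
    rw [mAA_bind_right (pn M) (↑Ns) pn]
    have e1 : ((Ns : Multiset PTerm).bind fun a => pn (PTerm.app M a))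
        = (Ns : Multiset PTerm).bind fun a => mAA (pn M) (pn a) :=
      Multiset.bind_congr fun a _ => pn_app M a
    have e2 : ((Ms : Multiset PTerm).bind fun Mi =>
          (((N :: Ns).map (PTerm.app Mi) : List PTerm) : Multiset PTerm).bind pn)
        = (Ms : Multiset PTerm).bind fun Mi =>
          (mAA (pn Mi) (pn N) + mAA (pn Mi) ((Ns : Multiset PTerm).bind pn)) := by
      refine Multiset.bind_congr fun Mi _ => ?_
      rw [show (((N :: Ns).map (PTerm.app Mi) : List PTerm) : Multiset PTerm)
        = ((N :: Ns : List PTerm) : Multiset PTerm).map (PTerm.app Mi) from rfl]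
      rw [Multiset.bind_map]
      rw [show ((N :: Ns : List PTerm) : Multiset PTerm) = N ::ₘ (Ns : Multiset PTerm) from rfl]
      rw [Multiset.cons_bind]
      rw [pn_app, mAA_bind_right]
      congr 1
      exact Multiset.bind_congr fun a _ => pn_app Mi a
    rw [e1, e2, Multiset.bind_add]
    abel

theorem step_nf {s t : PTerm} (h : StepG s t) : nf s = nf t := by
  induction h with
  | gamma hg => exact gamma_nf hg
  | appL _ ih => simp only [nf, ih]
  | appR _ ih => simp only [nf, ih]
  | lam x _ ih => simp only [nf, ih]
  | collL _ ih => simp only [nf, ih]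
  | collR _ ih => simp only [nf, ih]

/-! ### Every term γ-reduces (up to congruence) to its normal form -/

theorem redg_of_cong {a b : PTerm} (h : Cong a b) : RedG a b :=
  Relation.ReflTransGen.single (Or.inr h)

theorem redg_of_step {a b : PTerm} (h : StepG a b) : RedG a b :=
  Relation.ReflTransGen.single (Or.inl h)

theorem redg_lift {f : PTerm → PTerm} (hs : ∀ {a b : PTerm}, StepG a b → StepG (f a) (f b))
    (hc : ∀ {a b : PTerm}, Cong a b → Cong (f a) (f b)) {a b : PTerm} (h : RedG a b) :
    RedG (f a) (f b) := by
  induction h with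
  | refl => exact Relation.ReflTransGen.refl
  | tail _ hstep ih => exact ih.tail (hstep.imp hs hc)

theorem redg_app {a a' b b' : PTerm} (h₁ : RedG a a') (h₂ : RedG b b') :
    RedG (.app a b) (.app a' b') := by
  refine Relation.ReflTransGen.trans
    (redg_lift (f := fun x => .app x b) (fun h => StepG.appL h) (fun h => Cong.app h (Cong.refl b)) h₁)
    (redg_lift (f := fun x => .app a' x) (fun h => StepG.appR h) (fun h => Cong.app (Cong.refl a') h) h₂)

theorem redg_coll {a a' b b' : PTerm} (h₁ : RedG a a') (h₂ : RedG b b') :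
    RedG (.coll a b) (.coll a' b') := by
  refine Relation.ReflTransGen.trans
    (redg_lift (f := fun x => .coll x b) (fun h => StepG.collL h) (fun h => Cong.coll h (Cong.refl b)) h₁)
    (redg_lift (f := fun x => .coll a' x) (fun h => StepG.collR h) (fun h => Cong.coll (Cong.refl a') h) h₂)

theorem redg_lam (x : ℕ) {a a' : PTerm} (h : RedG a a') : RedG (.lam x a) (.lam x a') :=
  redg_lift (fun h => StepG.lam x h) (fun h => Cong.lam x h) h

theorem cong_mkColl_perm : ∀ {l l' : List PTerm}, List.Perm l l' → l ≠ [] →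
    Cong (mkColl l) (mkColl l') := by
  intro l l' h
  induction h with
  | nil => intro h; exact absurd rfl h
  | cons x h ih =>
    intro _
    rename_i l₁ l₂ _
    cases l₁ with
    | nil =>
      rw [h.nil_eq]
      exact Cong.refl _
    | cons c l₁ =>
      have hne₂ : l₂ ≠ [] := by
        intro he
        subst he
        exact absurd h.eq_nil (by simp)
      rw [mkColl_cons_ne x (by simp), mkColl_cons_ne x hne₂]
      exact Cong.coll (Cong.refl x) (ih (by simp))
  | swap a b l =>
    intro _
    cases l with
    | nil => exact Cong.ord b a
    | cons c l =>
      rw [mkColl_cons_ne b (by simp), mkColl_cons_ne a (by simp),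
        mkColl_cons_ne a (by simp), mkColl_cons_ne b (by simp)]
      exact ((Cong.nest b a (mkColl (c :: l))).symm.trans
        (Cong.coll (Cong.ord b a) (Cong.refl _))).trans (Cong.nest a b (mkColl (c :: l)))
  | trans h₁ h₂ ih₁ ih₂ =>
    intro hne
    refine (ih₁ hne).trans (ih₂ ?_)
    intro he
    subst he
    exact hne h₁.eq_nil

theorem cong_mkColl_append : ∀ (a b : List PTerm), a ≠ [] → b ≠ [] →
    Cong (.coll (mkColl a) (mkColl b)) (mkColl (a ++ b)) := by
  intro a
  induction a with
  | nil => intro b h; exact absurd rfl h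
  | cons x a ih =>
    intro b _ hb
    cases a with
    | nil =>
      rw [show ([x] ++ b) = x :: b from rfl, mkColl_cons_ne x hb]
      exact Cong.refl _
    | cons c a =>
      rw [mkColl_cons_ne x (by simp), List.cons_append,
        mkColl_cons_ne x (by simp [hb])]
      exact (Cong.nest x (mkColl (c :: a)) (mkColl b)).trans
        (Cong.coll (Cong.refl x) (ih b (by simp) hb))

theorem cong_flatten (t : PTerm) : Cong t (mkColl (parts t)) := by
  induction t with
  | var n => exact Cong.refl _
  | app a b _ _ => exact Cong.refl _
  | lam x a _ => exact Cong.refl _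
  | coll a b ih₁ ih₂ =>
    show Cong _ (mkColl (parts a ++ parts b))
    exact (Cong.coll ih₁ ih₂).trans
      (cong_mkColl_append _ _ (parts_ne_nil a) (parts_ne_nil b))

theorem red_nf (t : PTerm) : RedG t (nf t) := by
  induction t with
  | var n => exact Relation.ReflTransGen.refl
  | lam x a ih => exact redg_lam x ih
  | coll a b ih₁ ih₂ =>
    refine (redg_coll ih₁ ih₂).trans (redg_of_cong ?_)
    show Cong _ (mkColl (srt (parts (nf a) ++ parts (nf b))))
    refine ((Cong.coll (cong_flatten (nf a)) (cong_flatten (nf b))).trans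
      (cong_mkColl_append _ _ (parts_ne_nil _) (parts_ne_nil _))).trans ?_
    exact cong_mkColl_perm (srt_perm _).symm (by simp [parts_ne_nil])
  | app a b ih₁ ih₂ =>
    refine (redg_app ih₁ ih₂).trans ?_
    show RedG _ (mkApp (nf a) (nf b))
    rw [mkApp]
    split
    case isTrue => exact Relation.ReflTransGen.refl
    case isFalse hcond =>
      obtain ⟨M₀, Ms', hpa⟩ : ∃ M₀ Ms', parts (nf a) = M₀ :: Ms' := by
        cases hp : parts (nf a) with
        | nil => exact absurd hp (parts_ne_nil _)
        | cons x xs => exact ⟨x, xs, rfl⟩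
      obtain ⟨N₀, Ns', hpb⟩ : ∃ N₀ Ns', parts (nf b) = N₀ :: Ns' := by
        cases hp : parts (nf b) with
        | nil => exact absurd hp (parts_ne_nil _)
        | cons x xs => exact ⟨x, xs, rfl⟩
      have hn : Ms' ≠ [] ∨ Ns' ≠ [] := by
        by_contra hcon
        push_neg at hcon
        exact hcond ⟨by rw [hpa, hcon.1]; rfl, by rw [hpb, hcon.2]; rfl⟩
      have hPa : Cong (nf a) (collOf M₀ Ms') := by
        have : collOf M₀ Ms' = nf a := by rw [← mkColl_cons, ← hpa, mkColl_parts_nf]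
        rw [this]; exact Cong.refl _
      have hPb : Cong (nf b) (collOf N₀ Ns') := by
        have : collOf N₀ Ns' = nf b := by rw [← mkColl_cons, ← hpb, mkColl_parts_nf]
        rw [this]; exact Cong.refl _
      have hstep := StepG.gamma (Gamma.mk (nf a) (nf b) M₀ N₀ Ms' Ns' hPa hPb hn)
      refine (redg_of_step hstep).trans (redg_of_cong ?_)
      have hL : collOf (.app M₀ N₀)
          (Ns'.map (.app M₀) ++ Ms'.flatMap fun Mi => (N₀ :: Ns').map (.app Mi))
          = mkColl (allApps (M₀ :: Ms') (N₀ :: Ns')) := by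
        rw [← mkColl_cons]
        congr 1
      rw [hL, hpa, hpb]
      exact cong_mkColl_perm (srt_perm _).symm
        (allApps_ne_nil (by simp) (by simp))

theorem redg_nf_eq {a b : PTerm} (h : RedG a b) : nf a = nf b := by
  induction h with
  | refl => rfl
  | tail _ hstep ih =>
    rcases hstep with h | h
    · exact ih.trans (step_nf h)
    · exact ih.trans (cong_nf h)

end StripAux

/-- Strip lemma for γ-reduction in the λ^p-calculus: if M →_γ N₁ (one-step
γ-reduction) and M ↠_γ N₂ (γ-reduction), then there is a λ^p-term N₃ such
that N₁ ↠_γ N₃ and N₂ ↠_γ N₃. -/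
theorem gamma_strip_lemma (M N₁ N₂ : PTerm) (h₁ : StepG M N₁) (h₂ : RedG M N₂) :
    ∃ N₃ : PTerm, RedG N₁ N₃ ∧ RedG N₂ N₃ := by
  refine ⟨StripAux.nf M, ?_, ?_⟩
  · have := StripAux.red_nf N₁
    rwa [← StripAux.step_nf h₁] at this
  · have := StripAux.red_nf N₂
    rwa [← StripAux.redg_nf_eq h₂] at this
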